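/- Every compact zero-dimensional G-space X is an inverse limit of expansive G-spaces. Specifically, for each clopen partition P of X, the map φ_P : X → P^G, φ_P(x)(g) = the part of P containing g(x), is continuous and G-equivariant, the images φ_P(X) are subshifts, and X is the inverse limit of the system (φ_P(X)) over all clopen partitions P ordered by refinement. -/

import Mathlib

variable {X : Type*} [TopologicalSpace X]

/-- A partition of `X` into nonempty clopen sets. -/
def IsClopenPartition (P : Set (Set X)) : Prop :=
  (∀ A ∈ P, IsClopen A ∧ A.Nonempty) ∧ P.PairwiseDisjoint id ∧ ⋃₀ P = Set.univ

/-- The part of the covering family `P` containing `y` (chosen via choice). -/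
noncomputable def partOf (P : Set (Set X)) (hP : ⋃₀ P = Set.univ) (y : X) : P := by
  have hy : y ∈ ⋃₀ P := by rw [hP]; trivial
  exact ⟨(Set.mem_sUnion.mp hy).choose, (Set.mem_sUnion.mp hy).choose_spec.1⟩

/-- The map `φ_P : X → P^G`, `φ_P(x)(g) = ` the part of `P` containing `g • x`. -/
noncomputable def Phi {G : Type*} [Group G] [MulAction G X]
    (P : Set (Set X)) (hP : ⋃₀ P = Set.univ) (x : X) : G → P :=
  fun g => partOf P hP (g • x)

set_option linter.unusedSectionVars false

lemma mem_partOf (P : Set (Set X)) (hP : ⋃₀ P = Set.univ) (y : X) :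
    y ∈ (partOf P hP y : Set X) := by
  have hy : y ∈ ⋃₀ P := by rw [hP]; trivial
  exact (Set.mem_sUnion.mp hy).choose_spec.2

lemma part_eq_of_mem {P : Set (Set X)} (hd : P.PairwiseDisjoint id) {A B : Set X}
    (hA : A ∈ P) (hB : B ∈ P) {y : X} (hyA : y ∈ A) (hyB : y ∈ B) : A = B := by
  by_contra h
  exact Set.disjoint_left.mp (hd hA hB h) hyA hyB

lemma partOf_eq {P : Set (Set X)} (hd : P.PairwiseDisjoint id) (hP : ⋃₀ P = Set.univ)
    {A : Set X} (hA : A ∈ P) {y : X} (hy : y ∈ A) : (partOf P hP y : Set X) = A :=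
  part_eq_of_mem hd (partOf P hP y).2 hA (mem_partOf P hP y) hy

lemma meet_partition {P P' : Set (Set X)} (hP : IsClopenPartition P)
    (hP' : IsClopenPartition P') :
    ∃ Q : Set (Set X), IsClopenPartition Q ∧ (∀ B ∈ Q, ∃ A ∈ P, B ⊆ A) ∧
      (∀ B ∈ Q, ∃ A ∈ P', B ⊆ A) := by
  refine ⟨{s | ∃ A ∈ P, ∃ B ∈ P', s = A ∩ B ∧ s.Nonempty}, ⟨?_, ?_, ?_⟩, ?_, ?_⟩
  · rintro s ⟨A, hA, B, hB, rfl, hne⟩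
    exact ⟨((hP.1 A hA).1).inter ((hP'.1 B hB).1), hne⟩
  · rintro s ⟨A, hA, B, hB, rfl, hne⟩ t ⟨A', hA', B', hB', rfl, hne'⟩ hst
    refine Set.disjoint_left.mpr fun y hy hy' => hst ?_
    have hAA : A = A' := part_eq_of_mem hP.2.1 hA hA' hy.1 hy'.1
    have hBB : B = B' := part_eq_of_mem hP'.2.1 hB hB' hy.2 hy'.2
    simp [hAA, hBB]
  · apply Set.eq_univ_of_forall
    intro x
    have hx : x ∈ ⋃₀ P := by rw [hP.2.2]; trivial
    have hx' : x ∈ ⋃₀ P' := by rw [hP'.2.2]; trivial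
    obtain ⟨A, hA, hxA⟩ := hx
    obtain ⟨B, hB, hxB⟩ := hx'
    exact ⟨A ∩ B, ⟨A, hA, B, hB, rfl, ⟨x, hxA, hxB⟩⟩, hxA, hxB⟩
  · rintro s ⟨A, hA, B, hB, rfl, -⟩
    exact ⟨A, hA, Set.inter_subset_left⟩
  · rintro s ⟨A, hA, B, hB, rfl, -⟩
    exact ⟨B, hB, Set.inter_subset_right⟩

lemma common_refinement [Nonempty X] (S : Finset (Set (Set X)))
    (hS : ∀ P ∈ S, IsClopenPartition P) :
    ∃ Q : Set (Set X), IsClopenPartition Q ∧ ∀ P ∈ S, ∀ B ∈ Q, ∃ A ∈ P, B ⊆ A := by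
  classical
  induction S using Finset.induction_on with
  | empty =>
    refine ⟨{Set.univ}, ⟨?_, ?_, ?_⟩, by simp⟩
    · rintro A rfl; exact ⟨isClopen_univ, Set.univ_nonempty⟩
    · exact Set.pairwiseDisjoint_singleton _ _
    · simp
  | @insert P S' hPS ih =>
    obtain ⟨Q, hQ, hQref⟩ := ih fun P' hP' => hS P' (Finset.mem_insert_of_mem hP')
    obtain ⟨R, hR, hRP, hRQ⟩ := meet_partition (hS P (Finset.mem_insert_self _ _)) hQ
    refine ⟨R, hR, ?_⟩
    intro P' hP' B hB
    rcases Finset.mem_insert.mp hP' with rfl | hP'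
    · exact hRP B hB
    · obtain ⟨C, hC, hBC⟩ := hRQ B hB
      obtain ⟨A, hA, hCA⟩ := hQref P' hP' C hC
      exact ⟨A, hA, hBC.trans hCA⟩

/-- **Every compact zero-dimensional `G`-space is an inverse limit of expansive `G`-spaces
(subshifts).**  For each clopen partition `P` of `X`, the map `φ_P : X → P^G` with
`φ_P(x)(g)` the part of `P` containing `g • x` is continuous (coordinatewise locally
constant) and `G`-equivariant; its image is a subshift, i.e. it is invariant under the shift
action and the shift-translates of the value-at-identity partition separate its points; the
maps `φ_P` form an inverse system over partitions ordered by refinement; and `X` is the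
inverse limit of this system: the `φ_P` jointly separate points, and every compatible thread
of the system arises from a (unique) point of `X`. -/
theorem inverse_limit_of_expansive_quotients {G : Type*} [Group G] [MulAction G X]
    [CompactSpace X] [T2Space X] [TotallyDisconnectedSpace X]
    (hc : ∀ g : G, Continuous fun x : X => g • x) :
    (∀ (P : Set (Set X)) (hP : IsClopenPartition P),
      -- φ_P is well defined: φ_P(x)(g) contains g • x
      (∀ (x : X) (g : G), g • x ∈ (Phi P hP.2.2 x g : Set X)) ∧
      -- φ_P is continuous into the product of the discrete space P
      (∀ g : G, IsLocallyConstant fun x : X => Phi P hP.2.2 x g) ∧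
      -- φ_P is G-equivariant for the shift action (h · f)(g) = f (g * h)
      (∀ (h : G) (x : X) (g : G), Phi P hP.2.2 (h • x) g = Phi P hP.2.2 x (g * h)) ∧
      -- the image of φ_P is shift-invariant, and its points are separated by the
      -- shift-translates of the partition by the value at the identity: (G, φ_P(X)) is a
      -- subshift, in particular an expansive G-space
      (∀ h : G, ∀ f ∈ Set.range (Phi (G := G) P hP.2.2), (fun g => f (g * h)) ∈ Set.range (Phi (G := G) P hP.2.2)) ∧
      (∀ f ∈ Set.range (Phi (G := G) P hP.2.2), ∀ f' ∈ Set.range (Phi (G := G) P hP.2.2),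
        f ≠ f' → ∃ g : G, f g ≠ f' g) ∧
      -- the maps form an inverse system over partitions ordered by refinement
      (∀ (P' : Set (Set X)) (hP' : IsClopenPartition P'),
        (∀ B ∈ P', ∃ A ∈ P, B ⊆ A) →
        ∃ θ : P' → P, (∀ B : P', (B : Set X) ⊆ (θ B : Set X)) ∧
          ∀ (x : X) (g : G), Phi P hP.2.2 x g = θ (Phi P' hP'.2.2 x g))) ∧
    -- the maps φ_P jointly separate the points of X
    (∀ x y : X, x ≠ y →
      ∃ (P : Set (Set X)) (hP : IsClopenPartition P), Phi (G := G) P hP.2.2 x ≠ Phi (G := G) P hP.2.2 y) ∧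
    -- every compatible thread of elements of the images comes from a point of X:
    -- together with the previous separation property, X is the inverse limit of the system
    (∀ F : ∀ P : Set (Set X), IsClopenPartition P → G → Set X,
      (∀ (P : Set (Set X)) (hP : IsClopenPartition P),
        ∃ x : X, ∀ g : G, F P hP g = (Phi P hP.2.2 x g : Set X)) →
      (∀ (P P' : Set (Set X)) (hP : IsClopenPartition P) (hP' : IsClopenPartition P'),
        (∀ B ∈ P', ∃ A ∈ P, B ⊆ A) → ∀ g : G, F P' hP' g ⊆ F P hP g) →
      ∃ x : X, ∀ (P : Set (Set X)) (hP : IsClopenPartition P) (g : G),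
        F P hP g = (Phi P hP.2.2 x g : Set X)) := by
  classical
  refine ⟨?_, ?_, ?_⟩
  · intro P hP
    have hequiv : ∀ (h : G) (x : X) (g : G),
        Phi P hP.2.2 (h • x) g = Phi P hP.2.2 x (g * h) := by
      intro h x g
      show partOf P hP.2.2 (g • h • x) = partOf P hP.2.2 ((g * h) • x)
      rw [mul_smul]
    refine ⟨fun x g => mem_partOf P hP.2.2 (g • x), ?_, hequiv, ?_, ?_, ?_⟩
    · intro g
      rw [IsLocallyConstant.iff_isOpen_fiber]
      intro A
      have heq : (fun x : X => Phi P hP.2.2 x g) ⁻¹' {A}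
          = (fun x : X => g • x) ⁻¹' (A : Set X) := by
        ext x
        simp only [Set.mem_preimage, Set.mem_singleton_iff]
        constructor
        · rintro rfl; exact mem_partOf P hP.2.2 (g • x)
        · intro hx
          exact Subtype.ext (partOf_eq hP.2.1 hP.2.2 A.2 hx)
      rw [heq]
      exact (((hP.1 A A.2).1).preimage (hc g)).2
    · rintro h f ⟨x, rfl⟩
      exact ⟨h • x, funext fun g => hequiv h x g⟩
    · intro f _ f' _ hne
      by_contra hcon
      push_neg at hcon
      exact hne (funext hcon)
    · intro P' hP' href
      refine ⟨fun B => ⟨(href B B.2).choose, (href B B.2).choose_spec.1⟩,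
        fun B => (href B B.2).choose_spec.2, ?_⟩
      intro x g
      apply Subtype.ext
      exact part_eq_of_mem hP.2.1 (Phi P hP.2.2 x g).2
        (href _ (Phi P' hP'.2.2 x g).2).choose_spec.1
        (mem_partOf P hP.2.2 (g • x))
        ((href _ (Phi P' hP'.2.2 x g).2).choose_spec.2 (mem_partOf P' hP'.2.2 (g • x)))
  · intro x y hxy
    have : TotallySeparatedSpace X := loc_compact_t2_tot_disc_iff_tot_sep.mp ‹_›
    obtain ⟨U, hU, hxU, hyU⟩ := exists_isClopen_of_totally_separated hxy
    have hPart : IsClopenPartition ({U, Uᶜ} : Set (Set X)) := by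
      refine ⟨?_, ?_, ?_⟩
      · rintro A (rfl | rfl)
        · exact ⟨hU, ⟨x, hxU⟩⟩
        · exact ⟨hU.compl, ⟨y, hyU⟩⟩
      · rintro A (rfl | rfl) B (rfl | rfl) hne
        · exact absurd rfl hne
        · exact disjoint_compl_right
        · exact disjoint_compl_left
        · exact absurd rfl hne
      · rw [Set.sUnion_pair, Set.union_compl_self]
    refine ⟨{U, Uᶜ}, hPart, fun h => ?_⟩
    have hx1 : (Phi {U, Uᶜ} hPart.2.2 x (1 : G) : Set X) = U := by
      have hmem : (1 : G) • x ∈ U := by rw [one_smul]; exact hxU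
      exact partOf_eq hPart.2.1 hPart.2.2 (Or.inl rfl) hmem
    have hy1 : (Phi {U, Uᶜ} hPart.2.2 y (1 : G) : Set X) = Uᶜ := by
      have hmem : (1 : G) • y ∈ Uᶜ := by rw [one_smul]; exact hyU
      exact partOf_eq hPart.2.1 hPart.2.2 (Or.inr rfl) hmem
    have h1 : (Phi {U, Uᶜ} hPart.2.2 x (1 : G) : Set X)
        = (Phi {U, Uᶜ} hPart.2.2 y (1 : G) : Set X) := by rw [h]
    rw [hx1, hy1] at h1
    exact (h1 ▸ hxU) hxU
  · intro F hFex hFcomp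
    by_cases hX : Nonempty X
    · have : Nonempty X := hX
      have key : ∃ x : X, ∀ (P : Set (Set X)) (hP : IsClopenPartition P) (g : G),
          g • x ∈ F P hP g := by
        by_contra hcon
        have hempty : (Set.univ : Set X) ∩
            ⋂ i : {P : Set (Set X) // IsClopenPartition P} × G,
              (fun x : X => i.2 • x) ⁻¹' F i.1.1 i.1.2 i.2 = ∅ := by
          rw [Set.univ_inter]
          rw [Set.eq_empty_iff_forall_notMem]
          intro x hx
          rw [Set.mem_iInter] at hx
          exact hcon ⟨x, fun P hP g => hx ⟨⟨P, hP⟩, g⟩⟩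
        obtain ⟨t, ht⟩ := isCompact_univ.elim_finite_subfamily_closed
          (fun i : {P : Set (Set X) // IsClopenPartition P} × G =>
            (fun x : X => i.2 • x) ⁻¹' F i.1.1 i.1.2 i.2)
          (by
            rintro ⟨⟨P, hP⟩, g⟩
            obtain ⟨x₀, hx₀⟩ := hFex P hP
            have hFP : F P hP g ∈ P := by rw [hx₀ g]; exact (Phi P hP.2.2 x₀ g).2
            exact (((hP.1 _ hFP).1).preimage (hc g)).1)
          hempty
        set S : Finset (Set (Set X)) := t.image fun i => i.1.1 with hSdef
        have hS : ∀ P ∈ S, IsClopenPartition P := by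
          intro P hPS
          obtain ⟨i, hi, rfl⟩ := Finset.mem_image.mp hPS
          exact i.1.2
        obtain ⟨Q, hQ, hQref⟩ := common_refinement S hS
        obtain ⟨x, hx⟩ := hFex Q hQ
        have hx' : x ∈ (Set.univ : Set X) ∩ ⋂ i ∈ t,
            (fun x : X => i.2 • x) ⁻¹' F i.1.1 i.1.2 i.2 := by
          refine ⟨trivial, Set.mem_iInter₂.mpr ?_⟩
          rintro ⟨⟨P, hP⟩, g⟩ hi
          have hPS : P ∈ S := Finset.mem_image.mpr ⟨_, hi, rfl⟩
          have hsub : F Q hQ g ⊆ F P hP g := hFcomp P Q hP hQ (hQref P hPS) g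
          have hgx : g • x ∈ F Q hQ g := by
            rw [hx g]; exact mem_partOf Q hQ.2.2 (g • x)
          exact hsub hgx
        rw [ht] at hx'
        exact hx'
      obtain ⟨x, hx⟩ := key
      refine ⟨x, fun P hP g => ?_⟩
      obtain ⟨x₀, hx₀⟩ := hFex P hP
      have hFP : F P hP g ∈ P := by rw [hx₀ g]; exact (Phi P hP.2.2 x₀ g).2
      exact (partOf_eq hP.2.1 hP.2.2 hFP (hx P hP g)).symm
    · have hemp : IsClopenPartition (∅ : Set (Set X)) := by
        refine ⟨by simp, by simp, ?_⟩
        rw [Set.sUnion_empty]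
        exact (Set.univ_eq_empty_iff.mpr (not_nonempty_iff.mp hX)).symm
      obtain ⟨x, -⟩ := hFex ∅ hemp
      exact (hX ⟨x⟩).elim
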